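/- Let k > 0 and Dtheta in (-pi, pi) be real numbers with 1 + k^2 + 2k*cos(Dtheta) > 0, and define Dthetahat = sign(Dtheta) * arccos( (1 + k*cos(Dtheta)) / sqrt(1 + k^2 + 2k*cos(Dtheta)) ). Then cos( Dtheta - Dthetahat ) = ( cos(Dtheta) + k ) / sqrt( 1 + k^2 + 2k*cos(Dtheta) ). (Appendix B, key identity for the posterior estimation error of the single-axis filter.) -/
import Mathlib


noncomputable section

/-- Appendix B key identity: for `k > 0`, `Δθ ∈ (-π, π)` with `1 + k² + 2k cos Δθ > 0` and
`Δθ̂ = sign(Δθ) arccos((1 + k cos Δθ)/sqrt(1 + k² + 2k cos Δθ))`, one has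
`cos(Δθ - Δθ̂) = (cos Δθ + k)/sqrt(1 + k² + 2k cos Δθ)`. -/
theorem stmt16 (k Dtheta : ℝ) (hk : 0 < k)
    (h1 : -Real.pi < Dtheta) (h2 : Dtheta < Real.pi)
    (hpos : 0 < 1 + k ^ 2 + 2 * k * Real.cos Dtheta)
    (Dthetahat : ℝ)
    (hDh : Dthetahat = Real.sign Dtheta *
      Real.arccos ((1 + k * Real.cos Dtheta) /
        Real.sqrt (1 + k ^ 2 + 2 * k * Real.cos Dtheta))) :
    Real.cos (Dtheta - Dthetahat) =
      (Real.cos Dtheta + k) / Real.sqrt (1 + k ^ 2 + 2 * k * Real.cos Dtheta) := by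
  set A := 1 + k ^ 2 + 2 * k * Real.cos Dtheta with hA
  set S := Real.sqrt A with hSdef
  have hS : 0 < S := Real.sqrt_pos.mpr hpos
  have hS2 : S ^ 2 = A := Real.sq_sqrt hpos.le
  set c := (1 + k * Real.cos Dtheta) / S with hc
  have hpyth : Real.sin Dtheta ^ 2 + Real.cos Dtheta ^ 2 = 1 := Real.sin_sq_add_cos_sq _
  have hc2 : 1 - c ^ 2 = k ^ 2 * Real.sin Dtheta ^ 2 / S ^ 2 := by
    rw [hc]
    field_simp
    nlinarith [hS2, hpyth]
  have hsin : Real.sin (Real.arccos c) = k * |Real.sin Dtheta| / S := by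
    rw [Real.sin_arccos, hc2]
    have : k ^ 2 * Real.sin Dtheta ^ 2 / S ^ 2 = (k * |Real.sin Dtheta| / S) ^ 2 := by
      rw [div_pow, mul_pow, sq_abs]
    rw [this, Real.sqrt_sq (by positivity)]
  have hsq : c ^ 2 ≤ 1 := by
    have h0 : 0 ≤ k ^ 2 * Real.sin Dtheta ^ 2 / S ^ 2 := by positivity
    linarith [hc2 ▸ h0]
  have hcos : Real.cos (Real.arccos c) = c :=
    Real.cos_arccos (by nlinarith [sq_nonneg (c + 1)]) (by nlinarith [sq_nonneg (c - 1)])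
  have key : ∀ s : ℝ, s = |Real.sin Dtheta| →
      Real.cos Dtheta * c + Real.sin Dtheta * (k * s / S) =
      (Real.cos Dtheta + k) / S → True := fun _ _ _ => trivial
  have final : Real.cos Dtheta * c + k * Real.sin Dtheta ^ 2 / S =
      (Real.cos Dtheta + k) / S := by
    rw [hc]
    field_simp
    nlinarith [hpyth]
  rcases lt_trichotomy Dtheta 0 with hneg | hzero | hposθ
  · have hsign : Real.sign Dtheta = -1 := Real.sign_of_neg hneg
    have hsinneg : Real.sin Dtheta ≤ 0 :=
      (Real.sin_nonpos_of_nonpos_of_neg_pi_le hneg.le h1.le)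
    have habs : |Real.sin Dtheta| = -Real.sin Dtheta := abs_of_nonpos hsinneg
    rw [hDh, hsign, neg_one_mul, sub_neg_eq_add, Real.cos_add, hcos, hsin, habs]
    calc Real.cos Dtheta * c - Real.sin Dtheta * (k * -Real.sin Dtheta / S)
        = Real.cos Dtheta * c + k * Real.sin Dtheta ^ 2 / S := by ring
      _ = (Real.cos Dtheta + k) / S := final
  · subst hzero
    rw [hDh]
    simp only [Real.sign_zero, zero_mul, sub_zero, Real.cos_zero]
    have : A = (1 + k) ^ 2 := by rw [hA]; simp [Real.cos_zero]; ring
    rw [hSdef, this, Real.sqrt_sq (by linarith), div_self (by linarith)]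
  · have hsign : Real.sign Dtheta = 1 := Real.sign_of_pos hposθ
    have hsinpos : 0 ≤ Real.sin Dtheta := (Real.sin_pos_of_pos_of_lt_pi hposθ h2).le
    have habs : |Real.sin Dtheta| = Real.sin Dtheta := abs_of_nonneg hsinpos
    rw [hDh, hsign, one_mul, Real.cos_sub, hcos, hsin, habs]
    calc Real.cos Dtheta * c + Real.sin Dtheta * (k * Real.sin Dtheta / S)
        = Real.cos Dtheta * c + k * Real.sin Dtheta ^ 2 / S := by ring
      _ = (Real.cos Dtheta + k) / S := final
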